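/- Let (X,p) be a partial metric space, let I be a nontrivial admissible ideal of subsets of ℕ, let r ≥ 0, and let (a_n) and (b_n) be two sequences in X such that p(a_n, b_n) → 0 as n → ∞. If (b_n) is rough I-convergent to a point b ∈ X of roughness degree r and d is a positive real number such that p(b_n, b_n) ≤ d for all n ∈ ℕ, then (a_n) is rough I-convergent to b of roughness degree r + d. -/

import Mathlib

/-- A partial metric on `X` (Matthews): nonnegativity with small self-distances,
indistancy implies equality, symmetry, and the modified triangle inequality. -/
structure IsPartialMetric {X : Type*} (p : X → X → ℝ) : Prop where
  self_nonneg : ∀ x : X, 0 ≤ p x x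
  self_le : ∀ x y : X, p x x ≤ p x y
  eq_iff : ∀ x y : X, x = y ↔ (p x x = p x y ∧ p x y = p y y)
  symm : ∀ x y : X, p x y = p y x
  triangle : ∀ x y z : X, p x y ≤ p x z + p z y - p z z

/-- An ideal of subsets of `ℕ`. -/
structure IsIdeal (I : Set (Set ℕ)) : Prop where
  empty_mem : (∅ : Set ℕ) ∈ I
  union_mem : ∀ A B : Set ℕ, A ∈ I → B ∈ I → A ∪ B ∈ I
  subset_mem : ∀ A B : Set ℕ, A ∈ I → B ⊆ A → B ∈ I

/-- A nontrivial admissible ideal of subsets of `ℕ`. -/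
structure IsAdmissibleIdeal (I : Set (Set ℕ)) extends IsIdeal I : Prop where
  univ_not_mem : (Set.univ : Set ℕ) ∉ I
  ne_empty_singleton : I ≠ {∅}
  singleton_mem : ∀ n : ℕ, ({n} : Set ℕ) ∈ I

/-- `(x n)` is rough `I`-convergent to `x₀` of roughness degree `r` w.r.t. the
partial metric `p`. -/
def RoughIdealConv {X : Type*} (I : Set (Set ℕ)) (p : X → X → ℝ)
    (x : ℕ → X) (r : ℝ) (x₀ : X) : Prop :=
  ∀ ε : ℝ, 0 < ε → {n : ℕ | r + ε ≤ |p (x n) x₀ - p x₀ x₀|} ∈ I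

theorem rough_ideal_conv_transfer_degree_back
    {X : Type*} [Nonempty X] (p : X → X → ℝ) (hp : IsPartialMetric p)
    (I : Set (Set ℕ)) (hI : IsAdmissibleIdeal I)
    (r : ℝ) (hr : 0 ≤ r) (a b : ℕ → X)
    (hab : Filter.Tendsto (fun n => p (a n) (b n)) Filter.atTop (nhds 0))
    (x₀ : X) (hb : RoughIdealConv I p b r x₀)
    (d : ℝ) (hd : 0 < d) (hbb : ∀ n : ℕ, p (b n) (b n) ≤ d) :
    RoughIdealConv I p a (r + d) x₀ := by
  intro ε hε
  have hfin : ∀ S : Set ℕ, S.Finite → S ∈ I := by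
    intro S hS
    refine Set.Finite.induction_on (motive := fun S _ => S ∈ I) S hS hI.empty_mem ?_
    intro x s _ _ ih
    exact hI.subset_mem _ _ (hI.union_mem _ _ (hI.singleton_mem x) ih)
      (by rw [Set.insert_eq])
  obtain ⟨N, hN⟩ := (Metric.tendsto_atTop.mp hab) (ε / 2) (by linarith)
  have hb' := hb (ε / 2) (by linarith)
  apply hI.subset_mem ({n | n < N} ∪ {n | r + ε / 2 ≤ |p (b n) x₀ - p x₀ x₀|})
  · exact hI.union_mem _ _ (hfin _ (Set.finite_Iio N)) hb'
  · intro n hn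
    simp only [Set.mem_setOf_eq] at hn
    by_contra hnot
    simp only [Set.mem_union, Set.mem_setOf_eq, not_or, not_lt, not_le] at hnot
    obtain ⟨hnN, hbn⟩ := hnot
    have hdist := hN n hnN
    rw [Real.dist_eq, sub_zero] at hdist
    have hnn : 0 ≤ p (a n) (b n) :=
      le_trans (hp.self_nonneg (a n)) (hp.self_le (a n) (b n))
    have hab' : |p (a n) (b n)| < ε / 2 := hdist
    rw [abs_of_nonneg hnn] at hab'
    have h1 := hp.triangle (a n) x₀ (b n)
    have h2 := hp.triangle (b n) x₀ (a n)
    have hsymm : p (b n) (a n) = p (a n) (b n) := hp.symm _ _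
    have hbb' : 0 ≤ p (b n) (b n) := hp.self_nonneg _
    have haa' : 0 ≤ p (a n) (a n) := hp.self_nonneg _
    have hkey : |p (a n) x₀ - p (b n) x₀| ≤ p (a n) (b n) := by
      rw [abs_le]; constructor <;> linarith
    have htri : |p (a n) x₀ - p x₀ x₀| ≤
        |p (a n) x₀ - p (b n) x₀| + |p (b n) x₀ - p x₀ x₀| := abs_sub_le _ _ _
    linarith
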